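/- Let G be a broken wheel with principal path P = p₀ q p₁ and let L be a list-assignment for G with |L(v)| ≥ 3 for every v ∈ V(G) \ {p₀, q, p₁}, with L(p₀), L(p₁) nonempty and |L(p₀)| + |L(p₁)| ≥ 4. Define End(P, G) to be the set of L-colorings φ of {p₀, p₁} such that every extension of φ to an L-coloring of V(P) extends to an L-coloring of G. Then End(P, G) ≠ ∅, and moreover either |End(P, G)| ≥ 2 or the path G − q has an even number of edges. -/
import Mathlib


/-- Vertex type of a broken wheel whose hub-deleted path `p₀ u₁ … u_t p₁` has `t + 2`
vertices: `some i` is the `i`-th path vertex (so `some 0 = p₀` and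
`some (Fin.last (t+1)) = p₁`), and `none` is the hub `q`. -/
abbrev BWVert (t : ℕ) := Option (Fin (t + 2))

/-- Adjacency in the broken wheel: the hub `q` is adjacent to every path vertex, and
two path vertices are adjacent exactly when they are consecutive. -/
def bwAdj (t : ℕ) : BWVert t → BWVert t → Prop
  | none, none => False
  | none, some _ => True
  | some _, none => True
  | some i, some j => i.val + 1 = j.val ∨ j.val + 1 = i.val

/-- An `L`-coloring of (all of) the broken wheel. -/
def IsBWColoring (t : ℕ) (L : BWVert t → Finset ℕ) (c : BWVert t → ℕ) : Prop :=
  (∀ v, c v ∈ L v) ∧ ∀ v w, bwAdj t v w → c v ≠ c w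

/-- `(a, b, cc)` is an `L`-coloring of the principal path `P = p₀ q p₁` (colors listed
in the order `p₀, q, p₁`); note that `p₀` and `p₁` are themselves adjacent exactly when
`t = 0`. -/
def IsPColoring (t : ℕ) (L : BWVert t → Finset ℕ) (a b cc : ℕ) : Prop :=
  a ∈ L (some 0) ∧ b ∈ L none ∧ cc ∈ L (some (Fin.last (t + 1))) ∧
  a ≠ b ∧ b ≠ cc ∧ (bwAdj t (some 0) (some (Fin.last (t + 1))) → a ≠ cc)

/-- The coloring `a, b, cc` of `p₀, q, p₁` extends to an `L`-coloring of the whole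
broken wheel. -/
def ExtendsToBW (t : ℕ) (L : BWVert t → Finset ℕ) (a b cc : ℕ) : Prop :=
  ∃ c : BWVert t → ℕ, IsBWColoring t L c ∧
    c (some 0) = a ∧ c none = b ∧ c (some (Fin.last (t + 1))) = cc

/-- `End(P, G)`: the set of `L`-colorings of `{p₀, p₁}` (recorded as pairs
`(φ(p₀), φ(p₁))`) every extension of which to an `L`-coloring of `V(P)` extends to an
`L`-coloring of `G`. -/
def EndPG (t : ℕ) (L : BWVert t → Finset ℕ) : Set (ℕ × ℕ) :=
  {p | p.1 ∈ L (some 0) ∧ p.2 ∈ L (some (Fin.last (t + 1))) ∧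
    (bwAdj t (some 0) (some (Fin.last (t + 1))) → p.1 ≠ p.2) ∧
    ∀ b : ℕ, IsPColoring t L p.1 b p.2 → ExtendsToBW t L p.1 b p.2}

namespace BWAux

/-- the `j`-th path vertex, as a `BWVert t` (hub if out of range). -/
def u (t : ℕ) (j : ℕ) : BWVert t := if h : j < t + 2 then some ⟨j, h⟩ else none

/-- Abstract forced chain along indices 1..t with hub color b. -/
def AChain (M : ℕ → Finset ℕ) (t b : ℕ) (c : ℕ → ℕ) : Prop :=
  ∀ j, 1 ≤ j → j ≤ t →
    c j ≠ b ∧ c j ≠ c (j - 1) ∧ c (j - 1) ≠ b ∧ M j = {b, c (j - 1), c j}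

/-- `(a,cc)` is a bad pair: some legal hub color admits a forced chain from a to cc. -/
def Bad (t : ℕ) (L : BWVert t → Finset ℕ) (a cc : ℕ) : Prop :=
  ∃ b c, b ∈ L none ∧ b ≠ a ∧ b ≠ cc ∧ c 0 = a ∧ c t = cc ∧
    AChain (fun j => L (u t j)) t b c

/-- x is a reachable color at path position i. -/
def Reach (t : ℕ) (L : BWVert t → Finset ℕ) (a b i x : ℕ) : Prop :=
  ∃ g : ℕ → ℕ, g 0 = a ∧ g i = x ∧
    ∀ j, 1 ≤ j → j ≤ i → g j ∈ L (u t j) ∧ g j ≠ b ∧ g j ≠ g (j - 1)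

lemma reach_succ {t : ℕ} {L : BWVert t → Finset ℕ} {a b i x y : ℕ}
    (hy : Reach t L a b i y) (hx : x ∈ L (u t (i + 1))) (hxb : x ≠ b) (hxy : x ≠ y) :
    Reach t L a b (i + 1) x := by
  obtain ⟨g, hg0, hgi, hg⟩ := hy
  refine ⟨fun j => if j = i + 1 then x else g j, by simp [hg0], by simp, ?_⟩
  intro j hj1 hj2
  by_cases hje : j = i + 1
  · subst hje
    simp only [if_pos rfl, Nat.add_sub_cancel, if_neg (by omega : ¬ i = i + 1)]
    exact ⟨hx, hxb, by rw [hgi]; exact hxy⟩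
  · simp only [if_neg hje, if_neg (show ¬ j - 1 = i + 1 by omega)]
    exact hg j hj1 (by omega)

lemma reach_succ_inv {t : ℕ} {L : BWVert t → Finset ℕ} {a b i x : ℕ}
    (hx : Reach t L a b (i + 1) x) :
    x ∈ L (u t (i + 1)) ∧ x ≠ b ∧ ∃ y, Reach t L a b i y ∧ y ≠ x := by
  obtain ⟨g, hg0, hgi, hg⟩ := hx
  obtain ⟨h1, h2, h3⟩ := hg (i + 1) (by omega) le_rfl
  subst hgi
  exact ⟨h1, h2, g i, ⟨g, hg0, rfl, fun j hj1 hj2 => hg j hj1 (by omega)⟩,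
    by simpa using h3.symm⟩

lemma reach_zero {t : ℕ} {L : BWVert t → Finset ℕ} {a b : ℕ} :
    Reach t L a b 0 a :=
  ⟨fun _ => a, rfl, rfl, fun j hj1 hj2 => absurd (hj1.trans hj2) (by omega)⟩

lemma reach_zero_eq {t : ℕ} {L : BWVert t → Finset ℕ} {a b x : ℕ}
    (hx : Reach t L a b 0 x) : x = a := by
  obtain ⟨g, hg0, hgi, _⟩ := hx; rw [← hgi, hg0]

lemma dichotomy {t : ℕ} {L : BWVert t → Finset ℕ} {a b : ℕ}
    (hM : ∀ j, 1 ≤ j → j ≤ t → 3 ≤ (L (u t j)).card) (hba : b ≠ a) :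
    ∀ i, i ≤ t →
      (∃ x y, x ≠ y ∧ Reach t L a b i x ∧ Reach t L a b i y) ∨
      (∃ c : ℕ → ℕ, c 0 = a ∧ Reach t L a b i (c i) ∧
        (∀ x, Reach t L a b i x → x = c i) ∧ AChain (fun j => L (u t j)) i b c) := by
  intro i
  induction i with
  | zero =>
    intro _
    exact Or.inr ⟨fun _ => a, rfl, reach_zero, fun x hx => reach_zero_eq hx,
      fun j hj1 hj2 => absurd (hj1.trans hj2) (by omega)⟩
  | succ i ih =>
    intro hit
    have hMi : 3 ≤ (L (u t (i + 1))).card := hM (i + 1) (by omega) hit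
    rcases ih (by omega) with ⟨x, y, hxy, hx, hy⟩ | ⟨c, hc0, hcr, hcu, hch⟩
    · -- two reachable values at i : every color of (L (u t (i+1))) \ {b} is reachable
      left
      have h2 : 2 ≤ ((L (u t (i + 1))).erase b).card := by
        have := Finset.pred_card_le_card_erase (a := b) (s := L (u t (i + 1)))
        omega
      obtain ⟨z, hz, w, hw, hzw⟩ := Finset.one_lt_card.1 h2
      have hreach : ∀ v ∈ (L (u t (i + 1))).erase b, Reach t L a b (i + 1) v := by
        intro v hv
        obtain ⟨hvb, hvL⟩ := Finset.mem_erase.1 hv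
        rcases eq_or_ne v x with h | h
        · exact reach_succ hy hvL hvb (h ▸ hxy)
        · exact reach_succ hx hvL hvb h
      exact ⟨z, w, hzw, hreach z hz, hreach w hw⟩
    · -- unique reachable value c i at i
      set v := c i with hv
      have hvb : v ≠ b := by
        rcases Nat.eq_zero_or_pos i with h | h
        · rw [hv, h, hc0]; exact hba.symm
        · exact (hch i h le_rfl).1
      set S := (L (u t (i + 1))) \ {b, v} with hS
      have hbv2 : ({b, v} : Finset ℕ).card ≤ 2 := Finset.card_le_two
      have hScard : 1 ≤ S.card := by
        rw [hS]
        have := Finset.card_le_card_sdiff_add_card (s := L (u t (i + 1))) (t := ({b, v} : Finset ℕ))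
        omega
      have hSreach : ∀ z ∈ S, Reach t L a b (i + 1) z := by
        intro z hz
        obtain ⟨hzL, hzn⟩ := Finset.mem_sdiff.1 hz
        simp only [Finset.mem_insert, Finset.mem_singleton, not_or] at hzn
        exact reach_succ hcr hzL hzn.1 hzn.2
      rcases lt_or_eq_of_le hScard with h2 | h1
      · left
        obtain ⟨z, hz, w, hw, hzw⟩ := Finset.one_lt_card.1 h2
        exact ⟨z, w, hzw, hSreach z hz, hSreach w hw⟩
      · right
        obtain ⟨w, hw⟩ := Finset.card_eq_one.1 h1.symm
        have hwS : w ∈ S := hw ▸ Finset.mem_singleton_self w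
        obtain ⟨hwL, hwn⟩ := Finset.mem_sdiff.1 hwS
        simp only [Finset.mem_insert, Finset.mem_singleton, not_or] at hwn
        have hvL : v ∈ L (u t (i + 1)) := by
          by_contra hvL
          have hsub : (L (u t (i + 1))).erase b ⊆ S := by
            intro z hz
            obtain ⟨hzb, hzL⟩ := Finset.mem_erase.1 hz
            refine Finset.mem_sdiff.2 ⟨hzL, ?_⟩
            simp only [Finset.mem_insert, Finset.mem_singleton, not_or]
            exact ⟨hzb, fun h => hvL (h ▸ hzL)⟩
          have h2 := Finset.card_le_card hsub
          have := Finset.pred_card_le_card_erase (a := b) (s := L (u t (i + 1)))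
          omega
        have hbL : b ∈ L (u t (i + 1)) := by
          by_contra hbL
          have hsub : (L (u t (i + 1))).erase v ⊆ S := by
            intro z hz
            obtain ⟨hzv, hzL⟩ := Finset.mem_erase.1 hz
            refine Finset.mem_sdiff.2 ⟨hzL, ?_⟩
            simp only [Finset.mem_insert, Finset.mem_singleton, not_or]
            exact ⟨fun h => hbL (h ▸ hzL), hzv⟩
          have h2 := Finset.card_le_card hsub
          have := Finset.pred_card_le_card_erase (a := v) (s := L (u t (i + 1)))
          omega
        have hMeq : L (u t (i + 1)) = {b, v, w} := by
          refine Finset.Subset.antisymm ?_ ?_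
          · intro z hz
            simp only [Finset.mem_insert, Finset.mem_singleton]
            by_cases hzb : z = b
            · exact Or.inl hzb
            by_cases hzv : z = v
            · exact Or.inr (Or.inl hzv)
            have hzS : z ∈ S := by
              refine Finset.mem_sdiff.2 ⟨hz, ?_⟩
              simp only [Finset.mem_insert, Finset.mem_singleton, not_or]
              exact ⟨hzb, hzv⟩
            rw [hw] at hzS
            exact Or.inr (Or.inr (Finset.mem_singleton.1 hzS))
          · intro z hz
            simp only [Finset.mem_insert, Finset.mem_singleton] at hz
            rcases hz with h | h | h
            · exact h ▸ hbL
            · exact h ▸ hvL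
            · exact h ▸ hwL
        refine ⟨fun j => if j = i + 1 then w else c j, by simp [hc0], ?_, ?_, ?_⟩
        · simp only [if_pos rfl]
          exact hSreach w hwS
        · intro x hx
          simp only [if_pos rfl]
          obtain ⟨hxL, hxb, y, hyr, hyx⟩ := reach_succ_inv hx
          have hyv : y = v := hcu y hyr
          rw [hMeq] at hxL
          simp only [Finset.mem_insert, Finset.mem_singleton] at hxL
          rcases hxL with h | h | h
          · exact absurd h hxb
          · exact absurd (hyv.trans h.symm) hyx
          · exact h
        · intro j hj1 hj2
          by_cases hje : j = i + 1
          · subst hje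
            simp only [if_pos rfl, Nat.add_sub_cancel, if_neg (by omega : ¬ i = i + 1)]
            exact ⟨hwn.1, hwn.2, hvb, hMeq⟩
          · simp only [if_neg hje, if_neg (show ¬ j - 1 = i + 1 by omega)]
            exact hch j hj1 (by omega)

end BWAux
namespace BWAux

lemma u_eq (t j : ℕ) (h : j < t + 2) : u t j = some ⟨j, h⟩ := dif_pos h

lemma u_zero (t : ℕ) : u t 0 = some 0 := by
  rw [u_eq t 0 (by omega)]
  rfl

lemma u_last (t : ℕ) : u t (t + 1) = some (Fin.last (t + 1)) := by
  rw [u_eq t (t + 1) (by omega)]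
  rfl

lemma reach_extends {t : ℕ} {L : BWVert t → Finset ℕ} {a b cc x : ℕ}
    (ha : a ∈ L (some 0)) (hcc : cc ∈ L (some (Fin.last (t + 1)))) (hb : b ∈ L none)
    (hab : a ≠ b) (hbcc : b ≠ cc)
    (hx : Reach t L a b t x) (hxcc : x ≠ cc) :
    ExtendsToBW t L a b cc := by
  obtain ⟨g, hg0, hgt, hg⟩ := hx
  set cf : BWVert t → ℕ :=
    fun v => v.elim b (fun i => if i.val = t + 1 then cc else g i.val) with hcf
  have hcfn : cf none = b := rfl
  have hcfs : ∀ i : Fin (t + 2), cf (some i) = if i.val = t + 1 then cc else g i.val :=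
    fun i => rfl
  have hcf0 : cf (some 0) = a := by
    rw [hcfs, Fin.val_zero, if_neg (by omega), hg0]
  have hcflast : cf (some (Fin.last (t + 1))) = cc := by
    rw [hcfs, Fin.val_last, if_pos rfl]
  -- colors of interior-indexed vertices
  have hcfi : ∀ i : Fin (t + 2), i.val ≤ t → cf (some i) = g i.val := by
    intro i hi
    rw [hcfs, if_neg (by omega)]
  have hmem : ∀ v, cf v ∈ L v := by
    intro v
    match v with
    | none => exact hb
    | some i =>
      by_cases hi : i.val = t + 1
      · have : some i = some (Fin.last (t + 1)) := by
          congr 1; exact Fin.ext hi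
        rw [this, hcflast]; exact hcc
      · have hile : i.val ≤ t := by have := i.isLt; omega
        rw [hcfi i hile]
        rcases Nat.eq_zero_or_pos i.val with h0 | h0
        · have : some i = (some 0 : BWVert t) := by
            congr 1; exact Fin.ext (by simp [h0])
          rw [h0, hg0, this]; exact ha
        · have := (hg i.val h0 hile).1
          rwa [u_eq t i.val i.isLt, show (⟨i.val, i.isLt⟩ : Fin (t + 2)) = i from Fin.ext rfl]
            at this
  -- consecutive path vertices get different colors
  have hconsec : ∀ i j : Fin (t + 2), i.val + 1 = j.val → cf (some i) ≠ cf (some j) := by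
    intro i j hij
    by_cases hj : j.val = t + 1
    · have hit : i.val = t := by omega
      rw [hcfi i (by omega), hit]
      have : some j = some (Fin.last (t + 1)) := by congr 1; exact Fin.ext hj
      rw [this, hcflast, hgt]
      exact hxcc
    · have hjle : j.val ≤ t := by have := j.isLt; omega
      rw [hcfi i (by omega), hcfi j hjle]
      have := (hg j.val (by omega) hjle).2.2
      rw [show j.val - 1 = i.val by omega] at this
      exact this.symm
  -- hub color differs from path colors
  have hhub : ∀ i : Fin (t + 2), b ≠ cf (some i) := by
    intro i
    by_cases hi : i.val = t + 1
    · have : some i = some (Fin.last (t + 1)) := by congr 1; exact Fin.ext hi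
      rw [this, hcflast]; exact hbcc
    · have hile : i.val ≤ t := by have := i.isLt; omega
      rw [hcfi i hile]
      rcases Nat.eq_zero_or_pos i.val with h0 | h0
      · rw [h0, hg0]; exact hab.symm
      · exact ((hg i.val h0 hile).2.1).symm
  refine ⟨cf, ⟨hmem, ?_⟩, hcf0, hcfn, hcflast⟩
  intro v w hadj
  match v, w with
  | none, none => exact absurd hadj id
  | none, some i => exact hhub i
  | some i, none => exact (hhub i).symm
  | some i, some j =>
    rcases hadj with h | h
    · exact hconsec i j h
    · exact (hconsec j i h).symm

lemma not_bad_mem_End {t : ℕ} {L : BWVert t → Finset ℕ}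
    (hM : ∀ j, 1 ≤ j → j ≤ t → 3 ≤ (L (u t j)).card) {a cc : ℕ}
    (ha : a ∈ L (some 0)) (hcc : cc ∈ L (some (Fin.last (t + 1))))
    (hadj : bwAdj t (some 0) (some (Fin.last (t + 1))) → a ≠ cc)
    (hnb : ¬ Bad t L a cc) : (a, cc) ∈ EndPG t L := by
  refine ⟨ha, hcc, hadj, ?_⟩
  intro b hP
  obtain ⟨_, hb, _, hab, hbcc, _⟩ := hP
  rcases dichotomy hM (Ne.symm hab) t le_rfl with ⟨x, y, hxy, hx, hy⟩ | ⟨c, hc0, hcr, hcu, hch⟩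
  · rcases eq_or_ne x cc with h | h
    · exact reach_extends ha hcc hb hab hbcc hy (by rw [h] at hxy; exact hxy.symm)
    · exact reach_extends ha hcc hb hab hbcc hx h
  · rcases eq_or_ne (c t) cc with h | h
    · exact absurd ⟨b, c, hb, Ne.symm hab, hbcc, hc0, h, hch⟩ hnb
    · exact reach_extends ha hcc hb hab hbcc hcr h

end BWAux
namespace BWAux

lemma achain_unique {M : ℕ → Finset ℕ} {t b : ℕ} {c c' : ℕ → ℕ}
    (h : AChain M t b c) (h' : AChain M t b c') (h0 : c 0 = c' 0) :
    ∀ j, j ≤ t → c j = c' j := by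
  intro j
  induction j with
  | zero => intro _; exact h0
  | succ j ih =>
    intro hj
    obtain ⟨h1, h2, h3, h4⟩ := h (j + 1) (by omega) hj
    obtain ⟨h1', h2', h3', h4'⟩ := h' (j + 1) (by omega) hj
    simp only [Nat.add_sub_cancel] at h1 h2 h3 h4 h1' h2' h3' h4'
    have hjj : c j = c' j := ih (by omega)
    have hmem : c (j + 1) ∈ ({b, c' j, c' (j + 1)} : Finset ℕ) := by
      rw [← h4', h4]
      simp
    simp only [Finset.mem_insert, Finset.mem_singleton] at hmem
    rcases hmem with h | h | h
    · exact absurd h h1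
    · exact absurd (hjj ▸ h) h2
    · exact h

lemma achain_two {M : ℕ → Finset ℕ} {t b b' : ℕ} {c c' : ℕ → ℕ}
    (hbb' : b ≠ b') (h : AChain M t b c) (h' : AChain M t b' c')
    (h0 : c 0 = c' 0) (h0b : c 0 ≠ b) (h0b' : c 0 ≠ b') :
    ∀ j, j ≤ t →
      (Even j → c j = c' j ∧ c j ≠ b ∧ c j ≠ b') ∧
      (Odd j → c j = b' ∧ c' j = b) := by
  intro j
  induction j with
  | zero =>
    intro _
    exact ⟨fun _ => ⟨h0, h0b, h0b'⟩, fun ho => absurd ho (by simp)⟩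
  | succ j ih =>
    intro hj
    obtain ⟨h1, h2, h3, h4⟩ := h (j + 1) (by omega) hj
    obtain ⟨h1', h2', h3', h4'⟩ := h' (j + 1) (by omega) hj
    simp only [Nat.add_sub_cancel] at h1 h2 h3 h4 h1' h2' h3' h4'
    obtain ⟨ihe, iho⟩ := ih (by omega)
    rcases Nat.even_or_odd j with hje | hjo
    · -- j even, j+1 odd : the chains diverge to b' and b
      obtain ⟨hd, hdb, hdb'⟩ := ihe hje
      constructor
      · intro hfalse; exact absurd hje (Nat.even_add_one.mp hfalse)
      · intro _
        constructor
        · -- b' ∈ M (j+1) = {b, c j, c (j+1)}, b' ≠ b, b' ≠ c j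
          have hmem : b' ∈ ({b, c j, c (j + 1)} : Finset ℕ) := by
            rw [← h4, h4']
            simp
          simp only [Finset.mem_insert, Finset.mem_singleton] at hmem
          rcases hmem with hh | hh | hh
          · exact absurd hh.symm hbb'
          · exact absurd hh.symm hdb'
          · exact hh.symm
        · have hmem : b ∈ ({b', c' j, c' (j + 1)} : Finset ℕ) := by
            rw [← h4', h4]
            simp
          simp only [Finset.mem_insert, Finset.mem_singleton] at hmem
          rcases hmem with hh | hh | hh
          · exact absurd hh hbb'
          · exact absurd hh.symm (hd ▸ hdb)
          · exact hh.symm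
    · -- j odd, j+1 even : the chains reconverge
      obtain ⟨hcb', hc'b⟩ := iho hjo
      constructor
      · intro _
        have hcb : c (j + 1) ≠ b' := by rw [← hcb']; exact h2
        have hmem : c (j + 1) ∈ ({b', c' j, c' (j + 1)} : Finset ℕ) := by
          rw [← h4', h4]
          simp
        simp only [Finset.mem_insert, Finset.mem_singleton] at hmem
        rcases hmem with hh | hh | hh
        · exact absurd hh hcb
        · exact absurd (hc'b ▸ hh) h1
        · exact ⟨hh, h1, hcb⟩
      · intro ho
        exact absurd hjo (Nat.odd_add_one.mp ho)

lemma achain_reverse {M : ℕ → Finset ℕ} {t b : ℕ} {c : ℕ → ℕ} (h : AChain M t b c) :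
    AChain (fun j => M (t + 1 - j)) t b (fun i => c (t - i)) := by
  intro j hj1 hj2
  obtain ⟨h1, h2, h3, h4⟩ := h (t + 1 - j) (by omega) (by omega)
  rw [show t + 1 - j - 1 = t - j by omega] at h2 h3 h4
  have e1 : t - (j - 1) = t + 1 - j := by omega
  simp only [e1]
  exact ⟨h3, fun hh => h2 hh.symm, h1, by rw [h4, Finset.pair_comm (c (t - j))]⟩

end BWAux
namespace BWAux

lemma two_chains {M : ℕ → Finset ℕ} {t b b' a cc cc' : ℕ} {c c' : ℕ → ℕ}
    (hbb' : b ≠ b') (hba : b ≠ a) (hb'a : b' ≠ a)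
    (hc : AChain M t b c) (hc' : AChain M t b' c')
    (h0 : c 0 = a) (h0' : c' 0 = a) (ht : c t = cc) (ht' : c' t = cc')
    (hne : cc ≠ cc') (htpos : 1 ≤ t) :
    Odd t ∧ cc = b' ∧ cc' = b ∧ M 1 = {b, a, b'} := by
  have h2 := achain_two hbb' hc hc' (h0.trans h0'.symm)
    (by rw [h0]; exact hba.symm) (by rw [h0]; exact hb'a.symm)
  have hodd : Odd t := by
    rcases Nat.even_or_odd t with he | ho
    · obtain ⟨heq, _, _⟩ := (h2 t le_rfl).1 he
      exact absurd (by rw [← ht, ← ht']; exact heq) hne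
    · exact ho
  obtain ⟨he1, he2⟩ := (h2 t le_rfl).2 hodd
  obtain ⟨hf1, hf2⟩ := (h2 1 htpos).2 (by simp)
  obtain ⟨_, _, _, hM1⟩ := hc 1 le_rfl htpos
  simp only [Nat.sub_self, h0] at hM1
  exact ⟨hodd, by rw [← ht]; exact he1, by rw [← ht']; exact he2, by rw [hM1, hf1]⟩

lemma badE {t : ℕ} {L : BWVert t → Finset ℕ} {a cc cc' : ℕ}
    (h : Bad t L a cc) (h' : Bad t L a cc') (hne : cc ≠ cc') :
    Odd t ∧ cc ≠ a ∧ cc' ≠ a ∧ L (u t 1) = {cc', a, cc} := by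
  obtain ⟨b, c, hbL, hba, hbcc, hc0, hct, hch⟩ := h
  obtain ⟨b', c', hbL', hba', hbcc', hc0', hct', hch'⟩ := h'
  have htpos : 1 ≤ t := by
    by_contra hh
    have ht0 : t = 0 := by omega
    subst ht0
    exact hne ((hct.symm.trans hc0).trans (hc0'.symm.trans hct'))
  have hbb' : b ≠ b' := by
    rintro rfl
    refine hne ?_
    rw [← hct, ← hct']
    exact achain_unique hch hch' (hc0.trans hc0'.symm) t le_rfl
  obtain ⟨hodd, he1, he2, hM1⟩ := two_chains hbb' hba hba' hch hch' hc0 hc0' hct hct'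
    hne htpos
  refine ⟨hodd, by rw [he1]; exact hba', by rw [he2]; exact hba, ?_⟩
  · rw [hM1, he1, he2]

lemma badE' {t : ℕ} {L : BWVert t → Finset ℕ} {a a' cc : ℕ}
    (h : Bad t L a cc) (h' : Bad t L a' cc) (hne : a ≠ a') :
    Odd t ∧ a ≠ cc ∧ a' ≠ cc ∧ L (u t t) = {a', cc, a} := by
  obtain ⟨b, c, hbL, hba, hbcc, hc0, hct, hch⟩ := h
  obtain ⟨b', c', hbL', hba', hbcc', hc0', hct', hch'⟩ := h'
  have htpos : 1 ≤ t := by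
    by_contra hh
    have ht0 : t = 0 := by omega
    subst ht0
    exact hne ((hc0.symm.trans hct).trans (hct'.symm.trans hc0'))
  have hrc := achain_reverse hch
  have hrc' := achain_reverse hch'
  have hbb' : b ≠ b' := by
    rintro rfl
    refine hne ?_
    have := achain_unique hrc hrc' (by simp [Nat.sub_self, hct, hct']) t le_rfl
    simp only [Nat.sub_self] at this
    rw [← hc0, ← hc0']
    exact this
  obtain ⟨hodd, he1, he2, hM1⟩ := two_chains hbb' hbcc hbcc' hrc hrc'
    (by simp [Nat.sub_self, hct]) (by simp [Nat.sub_self, hct'])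
    (by simp only [Nat.sub_self]; exact hc0) (by simp only [Nat.sub_self]; exact hc0')
    hne htpos
  have hMt : L (u t (t + 1 - 1)) = {b, cc, b'} := hM1
  rw [show t + 1 - 1 = t by omega] at hMt
  refine ⟨hodd, by rw [he1]; exact hbcc', by rw [he2]; exact hbcc, ?_⟩
  · rw [hMt, ← he1, ← he2]

lemma bad_cc_le_two {t : ℕ} {L : BWVert t → Finset ℕ} {a c1 c2 c3 : ℕ}
    (h1 : Bad t L a c1) (h2 : Bad t L a c2) (h3 : Bad t L a c3)
    (d12 : c1 ≠ c2) (d13 : c1 ≠ c3) (d23 : c2 ≠ c3) : False := by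
  obtain ⟨_, _, h2a, hM12⟩ := badE h1 h2 d12
  obtain ⟨_, _, _, hM13⟩ := badE h1 h3 d13
  have : c2 ∈ ({c3, a, c1} : Finset ℕ) := by
    rw [← hM13, hM12]; simp
  simp only [Finset.mem_insert, Finset.mem_singleton] at this
  rcases this with h | h | h
  · exact d23 h
  · exact h2a h
  · exact d12 h.symm

lemma bad_a_le_two {t : ℕ} {L : BWVert t → Finset ℕ} {cc a1 a2 a3 : ℕ}
    (h1 : Bad t L a1 cc) (h2 : Bad t L a2 cc) (h3 : Bad t L a3 cc)
    (d12 : a1 ≠ a2) (d13 : a1 ≠ a3) (d23 : a2 ≠ a3) : False := by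
  obtain ⟨_, _, h2a, hM12⟩ := badE' h1 h2 d12
  obtain ⟨_, _, _, hM13⟩ := badE' h1 h3 d13
  have : a2 ∈ ({a3, cc, a1} : Finset ℕ) := by
    rw [← hM13, hM12]; simp
  simp only [Finset.mem_insert, Finset.mem_singleton] at this
  rcases this with h | h | h
  · exact d23 h
  · exact h2a h
  · exact d12 h.symm

lemma bad_cc_unique_even {t : ℕ} {L : BWVert t → Finset ℕ} {a c1 c2 : ℕ}
    (he : Even t) (h1 : Bad t L a c1) (h2 : Bad t L a c2) : c1 = c2 := by
  by_contra hne
  exact (Nat.not_even_iff_odd.2 (badE h1 h2 hne).1) he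

lemma bad_a_unique_even {t : ℕ} {L : BWVert t → Finset ℕ} {cc a1 a2 : ℕ}
    (he : Even t) (h1 : Bad t L a1 cc) (h2 : Bad t L a2 cc) : a1 = a2 := by
  by_contra hne
  exact (Nat.not_even_iff_odd.2 (badE' h1 h2 hne).1) he

end BWAux
open BWAux

/-- Theorem 3.3 specialized to broken wheels: if `|L(p₀)| + |L(p₁)| ≥ 4`, then
`End(P, G) ≠ ∅`, and moreover either `|End(P, G)| ≥ 2` or the path `G - q` has an
even number of edges. -/
theorem bwheel_end_nonempty (t : ℕ) (L : BWVert t → Finset ℕ)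
    (hL : ∀ v : BWVert t, v ≠ some 0 → v ≠ none → v ≠ some (Fin.last (t + 1)) →
      3 ≤ (L v).card)
    (h0 : (L (some 0)).Nonempty) (h1 : (L (some (Fin.last (t + 1)))).Nonempty)
    (hsum : 4 ≤ (L (some 0)).card + (L (some (Fin.last (t + 1)))).card) :
    (EndPG t L).Nonempty ∧ (2 ≤ (EndPG t L).ncard ∨ Even (t + 1)) := by
  classical
  have hMcard : ∀ j, 1 ≤ j → j ≤ t → 3 ≤ (L (u t j)).card := by
    intro j hj1 hj2
    rw [u_eq t j (by omega)]
    apply hL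
    · intro hh
      rw [Option.some_inj] at hh
      have := congrArg Fin.val hh
      simp only [Fin.val_zero] at this
      omega
    · simp
    · intro hh
      rw [Option.some_inj] at hh
      have := congrArg Fin.val hh
      simp only [Fin.val_last] at this
      omega
  have hadj' : ∀ {a cc : ℕ}, (t = 0 → a ≠ cc) →
      (bwAdj t (some 0) (some (Fin.last (t + 1))) → a ≠ cc) := by
    intro a cc h hb
    have hb' : (0 : Fin (t + 2)).val + 1 = (Fin.last (t + 1)).val ∨
        (Fin.last (t + 1)).val + 1 = (0 : Fin (t + 2)).val := hb
    simp only [Fin.val_zero, Fin.val_last] at hb'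
    exact h (by omega)
  have hmem : ∀ a cc : ℕ, a ∈ L (some 0) → cc ∈ L (some (Fin.last (t + 1))) →
      (t = 0 → a ≠ cc) → ¬ Bad t L a cc → (a, cc) ∈ EndPG t L :=
    fun a cc ha hcc hne hnb => not_bad_mem_End hMcard ha hcc (hadj' hne) hnb
  have hfin : (EndPG t L).Finite := by
    apply Set.Finite.subset ((L (some 0) ×ˢ L (some (Fin.last (t + 1)))).finite_toSet)
    intro p hp
    exact Finset.mem_coe.2 (Finset.mem_product.2 ⟨hp.1, hp.2.1⟩)
  have two_of : ∀ p q : ℕ × ℕ, p ∈ EndPG t L → q ∈ EndPG t L → p ≠ q →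
      2 ≤ (EndPG t L).ncard := by
    intro p q hp hq hpq
    exact (Set.one_lt_ncard_iff hfin).2 ⟨p, q, hp, hq, hpq⟩
  rcases Nat.eq_zero_or_pos t with ht0 | htpos
  · -- t = 0 : End consists of all pairs (a, cc) with a ≠ cc, and there are ≥ 2 of them
    have hnb : ∀ a cc : ℕ, a ≠ cc → ¬ Bad t L a cc := by
      rintro a cc hne ⟨b, c, _, _, _, hc0, hct, _⟩
      rw [ht0] at hct
      exact hne (hc0.symm.trans hct)
    have hmem' : ∀ a cc : ℕ, a ∈ L (some 0) → cc ∈ L (some (Fin.last (t + 1))) →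
        a ≠ cc → (a, cc) ∈ EndPG t L :=
      fun a cc ha hcc hne => hmem a cc ha hcc (fun _ => hne) (hnb a cc hne)
    have hpairs : ∃ p q : ℕ × ℕ, p ≠ q ∧ p ∈ EndPG t L ∧ q ∈ EndPG t L := by
      rcases le_or_gt 2 (L (some 0)).card with hc2 | hc2
      · rcases le_or_gt 2 (L (some (Fin.last (t + 1)))).card with hd2 | hd2
        · obtain ⟨a, ha, a', ha', haa⟩ := Finset.one_lt_card.1 hc2
          obtain ⟨d, hd, d', hd', hdd⟩ := Finset.one_lt_card.1 hd2
          have pick : ∀ x : ℕ, ∃ e ∈ L (some (Fin.last (t + 1))), e ≠ x := by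
            intro x
            rcases eq_or_ne d x with h | h
            · exact ⟨d', hd', fun hh => hdd (h ▸ hh ▸ rfl)⟩
            · exact ⟨d, hd, h⟩
          obtain ⟨e, he, hea⟩ := pick a
          obtain ⟨e', he', hea'⟩ := pick a'
          exact ⟨(a, e), (a', e'), fun hh => haa (congrArg Prod.fst hh),
            hmem' a e ha he hea.symm, hmem' a' e' ha' he' hea'.symm⟩
        · -- |L1| = 1 hence |L0| ≥ 3
          obtain ⟨d, hd⟩ := h1
          have hc3 : 2 < (L (some 0)).card := by
            have := Finset.card_pos.2 ⟨d, hd⟩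
            omega
          have h2 : 2 ≤ ((L (some 0)).erase d).card := by
            have := Finset.pred_card_le_card_erase (a := d) (s := L (some 0))
            omega
          obtain ⟨a, ha, a', ha', haa⟩ := Finset.one_lt_card.1 h2
          obtain ⟨had, haL⟩ := Finset.mem_erase.1 ha
          obtain ⟨had', haL'⟩ := Finset.mem_erase.1 ha'
          exact ⟨(a, d), (a', d), fun hh => haa (congrArg Prod.fst hh),
            hmem' a d haL hd (fun hh => had hh), hmem' a' d haL' hd (fun hh => had' hh)⟩
      · -- |L0| = 1 hence |L1| ≥ 3
        obtain ⟨a, ha⟩ := h0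
        have hd3 : 2 < (L (some (Fin.last (t + 1)))).card := by
          have := Finset.card_pos.2 ⟨a, ha⟩
          omega
        have h2 : 2 ≤ ((L (some (Fin.last (t + 1)))).erase a).card := by
          have := Finset.pred_card_le_card_erase (a := a) (s := L (some (Fin.last (t + 1))))
          omega
        obtain ⟨d, hd, d', hd', hdd⟩ := Finset.one_lt_card.1 h2
        obtain ⟨hda, hdL⟩ := Finset.mem_erase.1 hd
        obtain ⟨hda', hdL'⟩ := Finset.mem_erase.1 hd'
        exact ⟨(a, d), (a, d'), fun hh => hdd (congrArg Prod.snd hh),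
          hmem' a d ha hdL (fun hh => hda hh.symm), hmem' a d' ha hdL' (fun hh => hda' hh.symm)⟩
    obtain ⟨p, q, hpq, hp, hq⟩ := hpairs
    exact ⟨⟨p, hp⟩, Or.inl (two_of p q hp hq hpq)⟩
  · -- t ≥ 1
    have hne0 : ∀ {a cc : ℕ}, (t = 0 → a ≠ cc) := fun h => absurd h (by omega)
    rcases Nat.even_or_odd t with hte | hto
    · -- t even (and ≥ 2) :at least 2 elements
      have huniq : ∀ a c1 c2 : ℕ, Bad t L a c1 → Bad t L a c2 → c1 = c2 :=
        fun a c1 c2 hb1 hb2 => bad_cc_unique_even hte hb1 hb2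
      have huniq' : ∀ cc a1 a2 : ℕ, Bad t L a1 cc → Bad t L a2 cc → a1 = a2 :=
        fun cc a1 a2 hb1 hb2 => bad_a_unique_even hte hb1 hb2
      have hgood : ∀ a : ℕ, 2 ≤ (L (some (Fin.last (t + 1)))).card →
          ∃ cc ∈ L (some (Fin.last (t + 1))), ¬ Bad t L a cc := by
        intro a h2
        by_contra hcon
        push_neg at hcon
        obtain ⟨d, hd, d', hd', hdd⟩ := Finset.one_lt_card.1 h2
        exact hdd (huniq a d d' (hcon d hd) (hcon d' hd'))
      have hpairs : ∃ p q : ℕ × ℕ, p ≠ q ∧ p ∈ EndPG t L ∧ q ∈ EndPG t L := by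
        rcases le_or_gt 2 (L (some (Fin.last (t + 1)))).card with hd2 | hd2
        · rcases le_or_gt 2 (L (some 0)).card with hc2 | hc2
          · obtain ⟨a, ha, a', ha', haa⟩ := Finset.one_lt_card.1 hc2
            obtain ⟨d, hd, hnb⟩ := hgood a hd2
            obtain ⟨d', hd', hnb'⟩ := hgood a' hd2
            exact ⟨(a, d), (a', d'), fun hh => haa (congrArg Prod.fst hh),
              hmem a d ha hd hne0 hnb, hmem a' d' ha' hd' hne0 hnb'⟩
          · -- |L0| = 1, |L1| ≥ 3
            obtain ⟨a, ha⟩ := h0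
            have hd3 : 2 < (L (some (Fin.last (t + 1)))).card := by
              have := Finset.card_pos.2 ⟨a, ha⟩
              omega
            obtain ⟨d1, hd1, d2, hd2', d3, hd3', h12, h13, h23⟩ :=
              Finset.two_lt_card.1 hd3
            by_cases hb1 : Bad t L a d1
            · have hnb2 : ¬ Bad t L a d2 := fun hb2 => h12 (huniq a d1 d2 hb1 hb2)
              have hnb3 : ¬ Bad t L a d3 := fun hb3 => h13 (huniq a d1 d3 hb1 hb3)
              exact ⟨(a, d2), (a, d3), fun hh => h23 (congrArg Prod.snd hh),
                hmem a d2 ha hd2' hne0 hnb2, hmem a d3 ha hd3' hne0 hnb3⟩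
            · by_cases hb2 : Bad t L a d2
              · have hnb3 : ¬ Bad t L a d3 := fun hb3 => h23 (huniq a d2 d3 hb2 hb3)
                exact ⟨(a, d1), (a, d3), fun hh => h13 (congrArg Prod.snd hh),
                  hmem a d1 ha hd1 hne0 hb1, hmem a d3 ha hd3' hne0 hnb3⟩
              · exact ⟨(a, d1), (a, d2), fun hh => h12 (congrArg Prod.snd hh),
                  hmem a d1 ha hd1 hne0 hb1, hmem a d2 ha hd2' hne0 hb2⟩
        · -- |L1| = 1, |L0| ≥ 3
          obtain ⟨d, hd⟩ := h1
          have hc3 : 2 < (L (some 0)).card := by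
            have := Finset.card_pos.2 ⟨d, hd⟩
            omega
          obtain ⟨a1, ha1, a2, ha2, a3, ha3, h12, h13, h23⟩ := Finset.two_lt_card.1 hc3
          by_cases hb1 : Bad t L a1 d
          · have hnb2 : ¬ Bad t L a2 d := fun hb2 => h12 (huniq' d a1 a2 hb1 hb2)
            have hnb3 : ¬ Bad t L a3 d := fun hb3 => h13 (huniq' d a1 a3 hb1 hb3)
            exact ⟨(a2, d), (a3, d), fun hh => h23 (congrArg Prod.fst hh),
              hmem a2 d ha2 hd hne0 hnb2, hmem a3 d ha3 hd hne0 hnb3⟩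
          · by_cases hb2 : Bad t L a2 d
            · have hnb3 : ¬ Bad t L a3 d := fun hb3 => h23 (huniq' d a2 a3 hb2 hb3)
              exact ⟨(a1, d), (a3, d), fun hh => h13 (congrArg Prod.fst hh),
                hmem a1 d ha1 hd hne0 hb1, hmem a3 d ha3 hd hne0 hnb3⟩
            · exact ⟨(a1, d), (a2, d), fun hh => h12 (congrArg Prod.fst hh),
                hmem a1 d ha1 hd hne0 hb1, hmem a2 d ha2 hd hne0 hb2⟩
      obtain ⟨p, q, hpq, hp, hq⟩ := hpairs
      exact ⟨⟨p, hp⟩, Or.inl (two_of p q hp hq hpq)⟩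
    · -- t odd : Even (t+1); it suffices to produce one element of End
      have heven : Even (t + 1) := Nat.even_add_one.2 (Nat.not_even_iff_odd.2 hto)
      refine ⟨?_, Or.inr heven⟩
      by_contra hempty
      have hallbad : ∀ a ∈ L (some 0), ∀ cc ∈ L (some (Fin.last (t + 1))),
          Bad t L a cc := by
        intro a ha cc hcc
        by_contra hnb
        exact hempty ⟨(a, cc), hmem a cc ha hcc hne0 hnb⟩
      rcases le_or_gt 3 (L (some (Fin.last (t + 1)))).card with hd3 | hd3
      · obtain ⟨a, ha⟩ := h0
        obtain ⟨d1, hd1, d2, hd2, d3, hd3', h12, h13, h23⟩ :=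
          Finset.two_lt_card.1 (by omega : 2 < (L (some (Fin.last (t + 1)))).card)
        exact bad_cc_le_two (hallbad a ha d1 hd1) (hallbad a ha d2 hd2)
          (hallbad a ha d3 hd3') h12 h13 h23
      · rcases le_or_gt 3 (L (some 0)).card with hc3 | hc3
        · obtain ⟨d, hd⟩ := h1
          obtain ⟨a1, ha1, a2, ha2, a3, ha3, h12, h13, h23⟩ :=
            Finset.two_lt_card.1 (by omega : 2 < (L (some 0)).card)
          exact bad_a_le_two (hallbad a1 ha1 d hd) (hallbad a2 ha2 d hd)
            (hallbad a3 ha3 d hd) h12 h13 h23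
        · -- |L0| = |L1| = 2
          have hc2 : (L (some 0)).card = 2 := by omega
          have hd2 : (L (some (Fin.last (t + 1)))).card = 2 := by omega
          obtain ⟨a, a', haa, hL0⟩ := Finset.card_eq_two.1 hc2
          obtain ⟨d, d', hdd, hL1⟩ := Finset.card_eq_two.1 hd2
          have ha : a ∈ L (some 0) := by rw [hL0]; simp
          have ha' : a' ∈ L (some 0) := by rw [hL0]; simp
          have hd : d ∈ L (some (Fin.last (t + 1))) := by rw [hL1]; simp
          have hd' : d' ∈ L (some (Fin.last (t + 1))) := by rw [hL1]; simp
          obtain ⟨_, hda, hd'a, hM1⟩ := badE (hallbad a ha d hd) (hallbad a ha d' hd') hdd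
          obtain ⟨_, hda', hd'a', hM1'⟩ := badE (hallbad a' ha' d hd)
            (hallbad a' ha' d' hd') hdd
          have hmem1 : a ∈ ({d', a', d} : Finset ℕ) := by
            rw [← hM1', hM1]; simp
          simp only [Finset.mem_insert, Finset.mem_singleton] at hmem1
          rcases hmem1 with h | h | h
          · exact hd'a h.symm
          · exact haa h
          · exact hda h.symm
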